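/- Covering length lower bound: with μ_t(s,a) as above, the covering length satisfies L ≥ log(2) / (2 · min_{(s,a)} ∑_{t=1}^T μ_t(s,a)). -/

import Mathlib

open Finset Classical

/--
Covering length lower bound.  Episodes are i.i.d. draws of trajectories
`τ : Fin T → S × A` from a distribution `ρ`, with occupancy measure
`μ t (s,a) = P(τ t = (s,a))`.  If `n` episodes suffice to visit every state-action pair
at least once with probability at least `1/2`, then
`n ≥ log(2) / (2 · min_{(s,a)} ∑_t μ_t(s,a))`; that is, the covering length `L` satisfies
`L ≥ log(2) / (2 · min_{(s,a)} ∑_t μ_t(s,a))`.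
-/
theorem covering_length_lower_bound
    {S A : Type*} [Fintype S] [Fintype A] [Nonempty S] [Nonempty A]
    (T : ℕ) (hT : 1 ≤ T)
    (ρ : (Fin T → S × A) → ℝ) (hnn : ∀ τ, 0 ≤ ρ τ) (hsum : ∑ τ, ρ τ = 1)
    (μ : Fin T → S × A → ℝ)
    (hμ : μ = fun t p => ∑ τ ∈ Finset.univ.filter (fun τ : Fin T → S × A => τ t = p), ρ τ)
    (coverProb : ℕ → ℝ)
    (hcp : coverProb = fun n =>
      ∑ ε ∈ Finset.univ.filter
          (fun ε : Fin n → (Fin T → S × A) => ∀ p : S × A, ∃ i t, ε i t = p),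
        ∏ i, ρ (ε i))
    (n : ℕ) (hcover : 1 ≤ 2 * coverProb n) :
    Real.log 2 / (2 * ⨅ p : S × A, ∑ t : Fin T, μ t p) ≤ n := by
  classical
  set m : ℝ := ⨅ p : S × A, ∑ t : Fin T, μ t p with hm
  obtain ⟨p₀, hp₀⟩ := exists_eq_ciInf_of_finite (f := fun p : S × A => ∑ t : Fin T, μ t p)
  -- hit set and hit probability for a single episode
  set H : Finset (Fin T → S × A) := Finset.univ.filter (fun τ : Fin T → S × A => ∃ t, τ t = p₀) with hH
  set B : Finset (Fin T → S × A) := Finset.univ.filter (fun τ : Fin T → S × A => ∀ t, τ t ≠ p₀) with hB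
  set q : ℝ := ∑ τ ∈ H, ρ τ with hq
  have hq0 : 0 ≤ q := Finset.sum_nonneg fun τ _ => hnn τ
  -- union bound: q ≤ ∑ t, μ t p₀ = m
  have hqm : q ≤ m := by
    have h1 : q ≤ ∑ τ ∈ H, ∑ t : Fin T, if τ t = p₀ then ρ τ else 0 := by
      apply Finset.sum_le_sum
      intro τ hτ
      obtain ⟨t, ht⟩ := (Finset.mem_filter.mp hτ).2
      calc ρ τ = if τ t = p₀ then ρ τ else 0 := by rw [if_pos ht]
        _ ≤ ∑ t : Fin T, if τ t = p₀ then ρ τ else 0 := by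
            apply Finset.single_le_sum (f := fun t => if τ t = p₀ then ρ τ else 0)
              (fun s _ => by split <;> [exact hnn τ; exact le_rfl]) (Finset.mem_univ t)
    have h2 : ∑ τ ∈ H, ∑ t : Fin T, (if τ t = p₀ then ρ τ else 0) ≤
        ∑ τ : Fin T → S × A, ∑ t : Fin T, (if τ t = p₀ then ρ τ else 0) := by
      apply Finset.sum_le_sum_of_subset_of_nonneg (Finset.filter_subset _ _)
      intro τ _ _
      exact Finset.sum_nonneg fun t _ => by split <;> [exact hnn τ; exact le_rfl]
    have h3 : ∑ τ : Fin T → S × A, ∑ t : Fin T, (if τ t = p₀ then ρ τ else 0)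
        = ∑ t : Fin T, μ t p₀ := by
      rw [Finset.sum_comm]
      refine Finset.sum_congr rfl fun t _ => ?_
      simp [hμ, Finset.sum_filter]
    calc q ≤ ∑ τ : Fin T → S × A, ∑ t : Fin T, (if τ t = p₀ then ρ τ else 0) := h1.trans h2
      _ = ∑ t : Fin T, μ t p₀ := h3
      _ = m := hp₀
  -- miss probability of a single episode
  have hmiss : ∑ τ ∈ B, ρ τ = 1 - q := by
    have := Finset.sum_filter_add_sum_filter_not Finset.univ
      (fun τ : Fin T → S × A => ∃ t, τ t = p₀) ρ
    have hBeq : B = Finset.univ.filter (fun τ : Fin T → S × A => ¬ ∃ t, τ t = p₀) := by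
      rw [hB]; apply Finset.filter_congr; intro τ _; push_neg; rfl
    rw [hBeq]
    rw [hsum] at this
    rw [hq, hH] at *
    linarith
  -- (1-q)^n equals the probability that no episode hits p₀
  have hpow : ∑ ε ∈ Fintype.piFinset (fun _ : Fin n => B), ∏ i, ρ (ε i) = (1 - q)^n := by
    rw [← Finset.prod_univ_sum (t := fun _ : Fin n => B) (f := fun _ τ => ρ τ)]
    rw [Finset.prod_congr rfl fun i _ => hmiss, Finset.prod_const, Finset.card_univ,
      Fintype.card_fin]
  -- total mass is 1
  have htot : ∑ ε : Fin n → (Fin T → S × A), ∏ i, ρ (ε i) = 1 := by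
    rw [← Fintype.piFinset_univ,
      ← Finset.prod_univ_sum (t := fun _ : Fin n => Finset.univ) (f := fun _ τ => ρ τ)]
    simp [hsum]
  -- the no-hit event is contained in the non-covering event
  have hsub : Fintype.piFinset (fun _ : Fin n => B) ⊆
      Finset.univ.filter (fun ε : Fin n → (Fin T → S × A) => ¬ ∀ p : S × A, ∃ i t, ε i t = p) := by
    intro ε hε
    rw [Fintype.mem_piFinset] at hε
    simp only [Finset.mem_filter, Finset.mem_univ, true_and]
    intro hall
    obtain ⟨i, t, hit⟩ := hall p₀
    exact (Finset.mem_filter.mp (hε i)).2 t hit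
  have hsplit : coverProb n +
      ∑ ε ∈ Finset.univ.filter (fun ε : Fin n → (Fin T → S × A) => ¬ ∀ p : S × A, ∃ i t, ε i t = p),
        ∏ i, ρ (ε i) = 1 := by
    rw [hcp]
    rw [Finset.sum_filter_add_sum_filter_not]
    exact htot
  have hhalf : (1 - q)^n ≤ 1/2 := by
    have h4 : ∑ ε ∈ Fintype.piFinset (fun _ : Fin n => B), ∏ i, ρ (ε i) ≤
        ∑ ε ∈ Finset.univ.filter (fun ε : Fin n → (Fin T → S × A) => ¬ ∀ p : S × A, ∃ i t, ε i t = p),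
          ∏ i, ρ (ε i) :=
      Finset.sum_le_sum_of_subset_of_nonneg hsub
        (fun ε _ _ => Finset.prod_nonneg fun i _ => hnn _)
    rw [hpow] at h4
    linarith
  -- n ≥ 1
  have hn1 : 1 ≤ n := by
    rcases Nat.eq_zero_or_pos n with h | h
    · subst h; norm_num at hhalf
    · exact h
  have hn1' : (1 : ℝ) ≤ n := by exact_mod_cast hn1
  have hlog2pos : 0 < Real.log 2 := Real.log_pos (by norm_num)
  -- case split on m
  by_cases hmhalf : (1/2 : ℝ) ≤ m
  · have : Real.log 2 / (2 * m) ≤ Real.log 2 := by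
      rw [div_le_iff₀ (by linarith : (0:ℝ) < 2 * m)]
      nlinarith
    have hlog2lt : Real.log 2 < 1 := by
      have := Real.log_two_lt_d9
      linarith
    linarith
  · push_neg at hmhalf
    have hq12 : q < 1/2 := lt_of_le_of_lt hqm hmhalf
    have h1q : (0:ℝ) < 1 - q := by linarith
    -- from (1-q)^n ≤ 1/2 : n * log(1-q) ≤ -log 2
    have hlog : (n : ℝ) * Real.log (1 - q) ≤ - Real.log 2 := by
      have := Real.log_le_log (by positivity : (0:ℝ) < (1-q)^n) hhalf
      rw [Real.log_pow] at this
      rw [show (1:ℝ)/2 = 2⁻¹ by norm_num, Real.log_inv] at this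
      exact this
    -- -log(1-q) ≤ 2q
    have hkey : - Real.log (1 - q) ≤ 2 * q := by
      have h1 : Real.log ((1-q)⁻¹) ≤ (1-q)⁻¹ - 1 :=
        Real.log_le_sub_one_of_pos (by positivity)
      rw [Real.log_inv] at h1
      have hu : (1-q) * (1-q)⁻¹ = 1 := mul_inv_cancel₀ (ne_of_gt h1q)
      nlinarith [inv_pos.mpr h1q]
    -- combine: log 2 ≤ 2 * m * n
    have hfin : Real.log 2 ≤ 2 * m * n := by
      have hn0 : (0:ℝ) ≤ n := by positivity
      nlinarith
    have hmpos : 0 < m := by nlinarith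
    rw [div_le_iff₀ (by linarith : (0:ℝ) < 2 * m)]
    nlinarith
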